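/- Let (P,ω) and (Q,ν) be finite labelled posets. Then E(P ⊕ Q, ω ⊕₁ ν) = E(P,ω) · E(Q,ν), where ⊕ denotes ordinal sum and ω ⊕₁ ν is any labelling of P ⊕ Q satisfying: (ω ⊕₁ ν)(x) < (ω ⊕₁ ν)(y) whenever ω(x) < ω(y) (x,y ∈ P), or ν(x) < ν(y) (x,y ∈ Q), or x ∈ Q and y ∈ P. -/
import Mathlib


open Polynomial

/-- `σ : P → {1,…,k}` (realised as `Fin k`) is a `(P,ω)`-partition if it is order reversing
and `x < y` with `ω x > ω y` implies `σ x > σ y`. -/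
def IsPPartition {α : Type*} [PartialOrder α] (ω : α → ℕ) {k : ℕ} (σ : α → Fin k) : Prop :=
  (∀ x y : α, x ≤ y → σ y ≤ σ x) ∧ (∀ x y : α, x < y → ω y < ω x → σ y < σ x)

/-- The `E`-polynomial `E(P,ω) = Σₖ e_k(P,ω) xᵏ`, where `e_k(P,ω)` is the number of
surjective `(P,ω)`-partitions `σ : P → {1,…,k}`. -/
noncomputable def Epoly (α : Type*) [PartialOrder α] (ω : α → ℕ) : Polynomial ℝ :=
  ∑ k ∈ Finset.range (Nat.card α + 1),
    C ((Nat.card {σ : α → Fin k // Function.Surjective σ ∧ IsPPartition ω σ} : ℕ) : ℝ) * X ^ k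

lemma epart_eq_zero (γ : Type*) [PartialOrder γ] [Finite γ] (ω : γ → ℕ) {k : ℕ}
    (hk : Nat.card γ < k) :
    Nat.card {σ : γ → Fin k // Function.Surjective σ ∧ IsPPartition ω σ} = 0 := by
  have : IsEmpty {σ : γ → Fin k // Function.Surjective σ ∧ IsPPartition ω σ} := by
    constructor
    rintro ⟨σ, hs, -⟩
    have := Nat.card_le_card_of_surjective σ hs
    simp only [Nat.card_eq_fintype_card, Fintype.card_fin] at this
    omega
  simp [Nat.card_eq_zero]

lemma coeff_Epoly (γ : Type*) [PartialOrder γ] [Finite γ] (ω : γ → ℕ) (n : ℕ) :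
    (Epoly γ ω).coeff n =
      ((Nat.card {σ : γ → Fin n // Function.Surjective σ ∧ IsPPartition ω σ} : ℕ) : ℝ) := by
  rw [Epoly, Polynomial.finset_sum_coeff]
  have : ∀ k ∈ Finset.range (Nat.card γ + 1),
      (C ((Nat.card {σ : γ → Fin k // Function.Surjective σ ∧ IsPPartition ω σ} : ℕ) : ℝ)
        * X ^ k).coeff n = if k = n then
        ((Nat.card {σ : γ → Fin k // Function.Surjective σ ∧ IsPPartition ω σ} : ℕ) : ℝ)
        else 0 := by
    intro k _
    rw [Polynomial.coeff_C_mul, Polynomial.coeff_X_pow]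
    by_cases h : n = k <;> simp [h, eq_comm]
  rw [Finset.sum_congr rfl this, Finset.sum_ite_eq' (Finset.range (Nat.card γ + 1))]
  by_cases h : n ∈ Finset.range (Nat.card γ + 1)
  · simp [h]
  · rw [if_neg h]
    rw [Finset.mem_range] at h
    rw [epart_eq_zero γ ω (by omega)]
    simp

section Glue

variable {α β : Type} [PartialOrder α] [PartialOrder β]

/-- Glue two partitions along the ordinal sum, with the `β`-part taking values `0,…,j-1` and
the `α`-part values `j,…,k-1`. -/
def glue (k j : ℕ) (hj : j ≤ k) (σα : α → Fin (k - j)) (σβ : β → Fin j) :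
    α ⊕ₗ β → Fin k := fun p =>
  Sum.elim (fun a => (⟨(σα a).val + j, by have := (σα a).isLt; omega⟩ : Fin k))
    (fun b => (⟨(σβ b).val, by have := (σβ b).isLt; omega⟩ : Fin k)) (ofLex p)

end Glue

lemma sum_reflect_helper (n : ℕ) (f g : ℕ → ℝ) :
    ∑ j ∈ Finset.range (n + 1), f (n - j) * g j
      = ∑ j ∈ Finset.range (n + 1), f j * g (n - j) := by
  rw [← Finset.sum_range_reflect (fun j => f (n - j) * g j) (n + 1)]
  refine Finset.sum_congr rfl fun j hj => ?_
  rw [Finset.mem_range] at hj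
  have h5 : n + 1 - 1 - j = n - j := by omega
  rw [h5, Nat.sub_sub_self (by omega : j ≤ n)]

lemma card_conv (α β : Type) [PartialOrder α] [PartialOrder β] [Finite α] [Finite β]
    (ω : α → ℕ) (ν : β → ℕ) (hω : Function.Injective ω) (hν : Function.Injective ν)
    (μ : α ⊕ β → ℕ) (hμ : Function.Injective μ)
    (h1 : ∀ x y : α, ω x < ω y → μ (Sum.inl x) < μ (Sum.inl y))
    (h2 : ∀ x y : β, ν x < ν y → μ (Sum.inr x) < μ (Sum.inr y))
    (h3 : ∀ (x : β) (y : α), μ (Sum.inr x) < μ (Sum.inl y)) (k : ℕ) :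
    Nat.card {σ : α ⊕ₗ β → Fin k // Function.Surjective σ ∧
        IsPPartition (fun p => μ (ofLex p)) σ} =
    ∑ j ∈ Finset.range (k + 1),
      Nat.card {σ : α → Fin (k - j) // Function.Surjective σ ∧ IsPPartition ω σ} *
      Nat.card {σ : β → Fin j // Function.Surjective σ ∧ IsPPartition ν σ} := by
  classical
  have h1' : ∀ x y : α, μ (Sum.inl x) < μ (Sum.inl y) → ω x < ω y := by
    intro x y h
    rcases lt_trichotomy (ω x) (ω y) with h' | h' | h'
    · exact h'
    · cases hω h'; omega
    · exact absurd (h1 _ _ h') (by omega)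
  have h2' : ∀ x y : β, μ (Sum.inr x) < μ (Sum.inr y) → ν x < ν y := by
    intro x y h
    rcases lt_trichotomy (ν x) (ν y) with h' | h' | h'
    · exact h'
    · cases hν h'; omega
    · exact absurd (h2 _ _ h') (by omega)
  -- the gluing map satisfies the required properties
  have glue_mem : ∀ (j : ℕ) (hj : j ≤ k) (σα : α → Fin (k - j)) (σβ : β → Fin j),
      Function.Surjective σα → IsPPartition ω σα →
      Function.Surjective σβ → IsPPartition ν σβ →
      Function.Surjective (glue k j hj σα σβ) ∧
        IsPPartition (fun p => μ (ofLex p)) (glue k j hj σα σβ) := by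
    intro j hj σα σβ hsα hpα hsβ hpβ
    refine ⟨?_, ?_, ?_⟩
    · intro t
      rcases lt_or_ge t.val j with ht | ht
      · obtain ⟨b, hb⟩ := hsβ ⟨t.val, ht⟩
        refine ⟨toLex (Sum.inr b), Fin.ext ?_⟩
        show (σβ b).val = t.val
        rw [hb]
      · obtain ⟨a, ha⟩ := hsα ⟨t.val - j, by have := t.isLt; omega⟩
        refine ⟨toLex (Sum.inl a), Fin.ext ?_⟩
        show (σα a).val + j = t.val
        rw [ha]
        simp
        omega
    · -- order reversing
      intro x y hxy
      obtain a | b := x <;> obtain a' | b' := y <;> rw [Fin.le_def]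
      · have haa : a ≤ a' := Sum.Lex.inl_le_inl_iff.mp hxy
        have h4 := hpα.1 a a' haa
        rw [Fin.le_def] at h4
        show (σα a').val + j ≤ (σα a).val + j
        omega
      · show (σβ b').val ≤ (σα a).val + j
        have := (σβ b').isLt
        omega
      · exact absurd hxy (Sum.Lex.not_inr_le_inl)
      · have hbb : b ≤ b' := Sum.Lex.inr_le_inr_iff.mp hxy
        have h4 := hpβ.1 b b' hbb
        rw [Fin.le_def] at h4
        show (σβ b').val ≤ (σβ b).val
        omega
    · -- strictness
      intro x y hxy hμxy
      obtain a | b := x <;> obtain a' | b' := y <;> rw [Fin.lt_def]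
      · have haa : a < a' := Sum.Lex.inl_lt_inl_iff.mp hxy
        have hw : ω a' < ω a := h1' _ _ hμxy
        have h4 := hpα.2 a a' haa hw
        rw [Fin.lt_def] at h4
        show (σα a').val + j < (σα a).val + j
        omega
      · show (σβ b').val < (σα a).val + j
        have := (σβ b').isLt
        omega
      · exact absurd hxy.le (Sum.Lex.not_inr_le_inl)
      · have hbb : b < b' := Sum.Lex.inr_lt_inr_iff.mp hxy
        have hw : ν b' < ν b := h2' _ _ hμxy
        have h4 := hpβ.2 b b' hbb hw
        rw [Fin.lt_def] at h4
        show (σβ b').val < (σβ b).val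
        omega
  let F : (Σ j : Fin (k + 1),
      ({σ : α → Fin (k - j.val) // Function.Surjective σ ∧ IsPPartition ω σ} ×
       {σ : β → Fin j.val // Function.Surjective σ ∧ IsPPartition ν σ})) →
      {σ : α ⊕ₗ β → Fin k // Function.Surjective σ ∧
        IsPPartition (fun p => μ (ofLex p)) σ} :=
    fun x => ⟨glue k x.1.val (by have := x.1.isLt; omega) x.2.1.val x.2.2.val,
      glue_mem x.1.val (by have := x.1.isLt; omega) x.2.1.val x.2.2.val
        x.2.1.2.1 x.2.1.2.2 x.2.2.2.1 x.2.2.2.2⟩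
  have hFinj : Function.Injective F := by
    rintro ⟨⟨j, hjk⟩, ⟨σα, hsα, hpα⟩, ⟨σβ, hsβ, hpβ⟩⟩
      ⟨⟨j', hjk'⟩, ⟨σα', hsα', hpα'⟩, ⟨σβ', hsβ', hpβ'⟩⟩ h
    have hval := congrFun (Subtype.ext_iff.mp h)
    have hβ : ∀ b, (σβ b).val = (σβ' b).val := by
      intro b
      exact congrArg Fin.val (hval (toLex (Sum.inr b)))
    have hα : ∀ a, (σα a).val + j = (σα' a).val + j' := by
      intro a
      exact congrArg Fin.val (hval (toLex (Sum.inl a)))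
    have hle : ∀ (m m' : ℕ) (τ : β → Fin m) (τ' : β → Fin m'),
        Function.Surjective τ → (∀ b, (τ b).val = (τ' b).val) → m ≤ m' := by
      intro m m' τ τ' hsur hvals
      rcases Nat.eq_zero_or_pos m with hm | hm
      · omega
      · obtain ⟨b, hb⟩ := hsur ⟨m - 1, by omega⟩
        have hv := hvals b
        have hlt := (τ' b).isLt
        rw [hb] at hv
        simp at hv
        omega
    have hjj' : j = j' := le_antisymm (hle _ _ σβ σβ' hsβ hβ)
      (hle _ _ σβ' σβ hsβ' (fun b => (hβ b).symm))
    subst hjj'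
    have hσβeq : σβ = σβ' := funext fun b => Fin.ext (hβ b)
    have hσαeq : σα = σα' := funext fun a => Fin.ext (by have := hα a; omega)
    subst hσβeq
    subst hσαeq
    rfl
  have hFsurj : Function.Surjective F := by
    rintro ⟨σ, hs, hp⟩
    have hcross : ∀ (a : α) (b : β),
        (σ (toLex (Sum.inr b))).val < (σ (toLex (Sum.inl a))).val := by
      intro a b
      exact hp.2 _ _ (Sum.Lex.inl_lt_inr a b) (h3 b a)
    letI := Fintype.ofFinite β
    set Sβ : Finset (Fin k) :=
      Finset.image (fun b => σ (toLex (Sum.inr b))) Finset.univ with hSβdef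
    set j := Sβ.card with hjdef
    have hjk : j ≤ k := by
      have := Finset.card_le_card (Finset.subset_univ Sβ)
      simpa using this
    have hdown : ∀ t ∈ Sβ, ∀ s : Fin k, s ≤ t → s ∈ Sβ := by
      intro t ht s hst
      obtain ⟨x, hx⟩ := hs s
      obtain a | b := x
      · exfalso
        obtain ⟨b, -, hb⟩ := Finset.mem_image.mp ht
        have hx' : σ (toLex (Sum.inl a)) = s := hx
        have h4 := hcross a b
        rw [hb, hx'] at h4
        rw [Fin.le_def] at hst
        omega
      · exact Finset.mem_image.mpr ⟨b, Finset.mem_univ _, hx⟩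
    have hb_lt : ∀ b, (σ (toLex (Sum.inr b))).val < j := by
      intro b
      have hmem : σ (toLex (Sum.inr b)) ∈ Sβ :=
        Finset.mem_image.mpr ⟨b, Finset.mem_univ _, rfl⟩
      have hsub : Finset.Iic (σ (toLex (Sum.inr b))) ⊆ Sβ := fun s hsmem =>
        hdown _ hmem s (Finset.mem_Iic.mp hsmem)
      have hcard := Finset.card_le_card hsub
      rw [← Finset.card_map Fin.valEmbedding, Fin.map_valEmbedding_Iic,
        Nat.card_Iic] at hcard
      omega
    have hfcard : (Finset.univ.filter (fun t : Fin k => t.val < j)).card = j := by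
      have himg : Finset.univ.filter (fun t : Fin k => t.val < j)
          = Finset.image (Fin.castLE hjk) Finset.univ := by
        ext t
        simp only [Finset.mem_filter, Finset.mem_univ, true_and, Finset.mem_image]
        constructor
        · intro ht
          exact ⟨⟨t.val, ht⟩, by apply Fin.ext; rfl⟩
        · rintro ⟨s, rfl⟩
          exact s.isLt

      rw [himg, Finset.card_image_of_injective _ (Fin.castLE_injective hjk),
        Finset.card_univ, Fintype.card_fin]
    have hSβ : Sβ = Finset.univ.filter (fun t : Fin k => t.val < j) := by
      apply Finset.eq_of_subset_of_card_le
      · intro t ht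
        obtain ⟨b, -, hb⟩ := Finset.mem_image.mp ht
        simp only [Finset.mem_filter, Finset.mem_univ, true_and]
        rw [← hb]
        exact hb_lt b
      · rw [hfcard]
    have ha_ge : ∀ a, j ≤ (σ (toLex (Sum.inl a))).val := by
      intro a
      by_contra hlt
      push_neg at hlt
      have hmem : σ (toLex (Sum.inl a)) ∈ Sβ := by
        rw [hSβ]
        simp [hlt]
      obtain ⟨b, -, hb⟩ := Finset.mem_image.mp hmem
      have := hcross a b
      rw [hb] at this
      omega
    let σβ : β → Fin j := fun b => ⟨(σ (toLex (Sum.inr b))).val, hb_lt b⟩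
    let σα : α → Fin (k - j) := fun a => ⟨(σ (toLex (Sum.inl a))).val - j, by
      have hh1 := (σ (toLex (Sum.inl a))).isLt
      have hh2 := ha_ge a
      omega⟩
    have hsβ' : Function.Surjective σβ := by
      intro t
      have : (⟨t.val, lt_of_lt_of_le t.isLt hjk⟩ : Fin k) ∈ Sβ := by
        rw [hSβ]
        simp [t.isLt]
      obtain ⟨b, -, hb⟩ := Finset.mem_image.mp this
      refine ⟨b, Fin.ext ?_⟩
      show (σ (toLex (Sum.inr b))).val = t.val
      rw [hb]
    have hsα' : Function.Surjective σα := by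
      intro t
      have htk : t.val + j < k := by have := t.isLt; omega
      obtain ⟨x, hx⟩ := hs ⟨t.val + j, htk⟩
      obtain a | b := x
      · refine ⟨a, Fin.ext ?_⟩
        show (σ (toLex (Sum.inl a))).val - j = t.val
        have hx' : σ (toLex (Sum.inl a)) = ⟨t.val + j, htk⟩ := hx
        rw [hx']
        simp
      · exfalso
        have hlt := hb_lt b
        have hx' : σ (toLex (Sum.inr b)) = ⟨t.val + j, htk⟩ := hx
        rw [hx'] at hlt
        have hlt' : t.val + j < j := hlt
        omega
    have hpβ' : IsPPartition ν σβ := by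
      constructor
      · intro x y hxy
        exact hp.1 _ _ (Sum.Lex.inr_le_inr_iff.mpr hxy)
      · intro x y hxy hw
        exact hp.2 _ _ (Sum.Lex.inr_lt_inr_iff.mpr hxy) (h2 y x hw)
    have hpα' : IsPPartition ω σα := by
      constructor
      · intro x y hxy
        have h4 := hp.1 _ _ (Sum.Lex.inl_le_inl_iff.mpr hxy)
        rw [Fin.le_def] at h4 ⊢
        have := ha_ge x
        have := ha_ge y
        show (σ (toLex (Sum.inl y))).val - j ≤ (σ (toLex (Sum.inl x))).val - j
        omega
      · intro x y hxy hw
        have h4 := hp.2 _ _ (Sum.Lex.inl_lt_inl_iff.mpr hxy) (h1 y x hw)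
        rw [Fin.lt_def] at h4 ⊢
        have := ha_ge x
        have := ha_ge y
        show (σ (toLex (Sum.inl y))).val - j < (σ (toLex (Sum.inl x))).val - j
        omega
    refine ⟨⟨⟨j, by omega⟩, ⟨σα, hsα', hpα'⟩, ⟨σβ, hsβ', hpβ'⟩⟩, ?_⟩
    apply Subtype.ext
    funext p
    apply Fin.ext
    obtain a | b := p
    · show (σα a).val + j = (σ (toLex (Sum.inl a))).val
      have := ha_ge a
      show (σ (toLex (Sum.inl a))).val - j + j = _
      omega
    · show (σβ b).val = (σ (toLex (Sum.inr b))).val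
      rfl
  have hcardeq := Nat.card_congr (Equiv.ofBijective F ⟨hFinj, hFsurj⟩)
  rw [← hcardeq]
  letI : ∀ i : ℕ, Fintype {σ : α → Fin i // Function.Surjective σ ∧ IsPPartition ω σ} :=
    fun i => Fintype.ofFinite _
  letI : ∀ i : ℕ, Fintype {σ : β → Fin i // Function.Surjective σ ∧ IsPPartition ν σ} :=
    fun i => Fintype.ofFinite _
  rw [Nat.card_eq_fintype_card, Fintype.card_sigma]
  rw [Fin.sum_univ_eq_sum_range (fun j =>
    Fintype.card ({σ : α → Fin (k - j) // Function.Surjective σ ∧ IsPPartition ω σ} ×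
      {σ : β → Fin j // Function.Surjective σ ∧ IsPPartition ν σ}))]
  refine Finset.sum_congr rfl fun j _ => ?_
  rw [Fintype.card_prod]
  rw [Nat.card_eq_fintype_card, Nat.card_eq_fintype_card]

/-- **Proposition 3.1, first part.** For the ordinal sum `P ⊕ Q` with a labelling `μ = ω ⊕₁ ν`
(labels increase from `Q` to `P`), `E(P ⊕ Q, ω ⊕₁ ν) = E(P,ω) · E(Q,ν)`. -/
theorem Epoly_ordinal_sum_one (α β : Type) [PartialOrder α] [PartialOrder β]
    [Finite α] [Finite β]
    (ω : α → ℕ) (ν : β → ℕ) (hω : Function.Injective ω) (hν : Function.Injective ν)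
    (μ : α ⊕ β → ℕ) (hμ : Function.Injective μ)
    (h1 : ∀ x y : α, ω x < ω y → μ (Sum.inl x) < μ (Sum.inl y))
    (h2 : ∀ x y : β, ν x < ν y → μ (Sum.inr x) < μ (Sum.inr y))
    (h3 : ∀ (x : β) (y : α), μ (Sum.inr x) < μ (Sum.inl y)) :
    Epoly (α ⊕ₗ β) (fun p => μ (ofLex p)) = Epoly α ω * Epoly β ν := by
  haveI : Finite (α ⊕ₗ β) := Finite.of_equiv _ toLex
  ext n
  rw [Polynomial.coeff_mul, coeff_Epoly]
  rw [card_conv α β ω ν hω hν μ hμ h1 h2 h3 n]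
  rw [Finset.Nat.sum_antidiagonal_eq_sum_range_succ
    (fun i j => (Epoly α ω).coeff i * (Epoly β ν).coeff j)]
  push_cast
  rw [sum_reflect_helper n
    (fun i => ((Nat.card {σ : α → Fin i // Function.Surjective σ ∧ IsPPartition ω σ} : ℕ) : ℝ))
    (fun i => ((Nat.card {σ : β → Fin i // Function.Surjective σ ∧ IsPPartition ν σ} : ℕ) : ℝ))]
  refine Finset.sum_congr rfl fun j _ => ?_
  rw [coeff_Epoly, coeff_Epoly]
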